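/- Let A ⊆ ℕ+ be nonempty and let d = gcd(A). In the graph on ℤ with edges {n, n-k} for k ∈ A, two integers m and n lie in the same connected component if and only if m ≡ n (mod d). -/

import Mathlib

/-- Let `A ⊆ ℕ+` be nonempty with `gcd A = d`. In the graph on `ℤ` with edges
`{n, n-k}` for `k ∈ A`, two integers lie in the same connected component iff they
are congruent modulo `d`. -/
theorem graph_components_are_congruence_classes (A : Set ℕ) (hA : A.Nonempty)
    (hpos : ∀ a ∈ A, 0 < a) (d : ℕ)
    (hd1 : ∀ a ∈ A, d ∣ a) (hd2 : ∀ e : ℕ, (∀ a ∈ A, e ∣ a) → e ∣ d) :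
    ∀ m n : ℤ,
      Relation.ReflTransGen (fun a b => (a - b).natAbs ∈ A) m n ↔ (d : ℤ) ∣ m - n := by
  set R : ℤ → ℤ → Prop := fun a b => (a - b).natAbs ∈ A with hR
  have hRsymm : Symmetric R := by
    intro a b h
    show (b - a).natAbs ∈ A
    rw [show b - a = -(a - b) by ring, Int.natAbs_neg]
    exact h
  set S : AddSubgroup ℤ := AddSubgroup.closure ((fun a : ℕ => (a : ℤ)) '' A) with hS
  -- the key equivalence with the subgroup generated by A
  have key : ∀ m n : ℤ, Relation.ReflTransGen R m n ↔ m - n ∈ S := by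
    intro m n
    constructor
    · intro h
      induction h with
      | refl => simpa using S.zero_mem
      | @tail b c _ hbc ih =>
        have hb : (b - c : ℤ) ∈ S := by
          have ha : ((b - c).natAbs : ℤ) ∈ S :=
            AddSubgroup.subset_closure ⟨(b - c).natAbs, hbc, rfl⟩
          rcases Int.natAbs_eq (b - c) with h' | h'
          · rw [h']; exact ha
          · rw [h']; exact S.neg_mem ha
        have := S.add_mem ih hb
        simpa [sub_add_sub_cancel] using this
    · intro h
      have main : ∀ x ∈ S, ∀ m : ℤ, Relation.ReflTransGen R m (m - x) := by
        intro x hx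
        induction hx using AddSubgroup.closure_induction with
        | mem y hy =>
          intro m
          obtain ⟨a, haA, rfl⟩ := hy
          refine Relation.ReflTransGen.single ?_
          simp [hR, haA]
        | zero => intro m; simpa using Relation.ReflTransGen.refl
        | add y z _ _ ihy ihz =>
          intro m
          have h1 := ihy m
          have h2 := ihz (m - y)
          have := h1.trans h2
          simpa [sub_sub] using this
        | neg y _ ihy =>
          intro m
          have h1 := ihy (m + y)
          have h2 : Relation.ReflTransGen R (m + y) m := by simpa using h1
          have h3 := (@Relation.ReflTransGen.stdSymm ℤ R ⟨hRsymm⟩).symm _ _ h2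
          simpa [sub_neg_eq_add] using h3
      have := main (m - n) h m
      simpa using this
  -- S is cyclic, generated by some g with g ∣ a for all a ∈ A and d ∣ g, g ∣ d
  obtain ⟨g, hg⟩ := Int.subgroup_cyclic S
  have hmemS : ∀ x : ℤ, x ∈ S ↔ g ∣ x := by
    intro x
    rw [hg, AddSubgroup.mem_closure_singleton]
    constructor
    · rintro ⟨k, hk⟩
      exact ⟨k, by rw [← hk, zsmul_eq_mul]; push_cast; ring⟩
    · rintro ⟨k, hk⟩
      exact ⟨k, by rw [hk, zsmul_eq_mul]; push_cast; ring⟩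
  -- d ∣ g
  have hSle : S ≤ AddSubgroup.zmultiples (d : ℤ) := by
    rw [hS]
    apply AddSubgroup.closure_le _ |>.mpr
    rintro x ⟨a, haA, rfl⟩
    exact AddSubgroup.mem_zmultiples_iff.mpr (by
      obtain ⟨k, hk⟩ := hd1 a haA
      exact ⟨k, by push_cast [hk]; rw [zsmul_eq_mul]; push_cast; ring⟩)
  have hdg : (d : ℤ) ∣ g := by
    have : g ∈ S := (hmemS g).mpr dvd_rfl
    obtain ⟨k, hk⟩ := AddSubgroup.mem_zmultiples_iff.mp (hSle this)
    exact ⟨k, by rw [← hk, zsmul_eq_mul]; push_cast; ring⟩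
  -- g ∣ d
  have hgd : g ∣ (d : ℤ) := by
    have h1 : ∀ a ∈ A, g.natAbs ∣ a := by
      intro a haA
      have hx : ((a : ℤ)) ∈ S := AddSubgroup.subset_closure ⟨a, haA, rfl⟩
      have hdvd := (hmemS _).mp hx
      have := Int.natAbs_dvd_natAbs.mpr hdvd
      simpa using this
    have h2 : g.natAbs ∣ d := hd2 _ h1
    have := Int.natCast_dvd_natCast.mpr h2
    exact (Int.natAbs_dvd).mp this
  -- conclude
  intro m n
  rw [key, hmemS]
  constructor
  · intro h
    exact hdg.trans h
  · intro h
    exact hgd.trans h
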